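/- For every poset X and every upper set S ∈ Up X, one has λ_X(η^Dn_{Up X}(S)) = Up(η^Dn_X)(S); concretely, both sides equal the set {T ∈ Dn X | (S ∩ T).Nonempty}. -/
import Mathlib


/-- The action of the upset functor `Up` on a map: the upward closure of the image. -/
def UpMap {X Y : Type*} [Preorder X] [Preorder Y] (f : X → Y) (S : UpperSet X) :
    UpperSet Y :=
  upperClosure (f '' (S : Set X))

/-- The action of the downset functor `Dn` on a map: the downward closure of the image. -/
def DnMap {X Y : Type*} [Preorder X] [Preorder Y] (f : X → Y) (S : LowerSet X) :
    LowerSet Y :=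
  lowerClosure (f '' (S : Set X))

/-- The unit of the upset monad: `x ↦ ↑{x}`. -/
def UpUnit {X : Type*} [Preorder X] (x : X) : UpperSet X :=
  UpperSet.Ici x

/-- The unit of the downset monad: `x ↦ ↓{x}`. -/
def DnUnit {X : Type*} [Preorder X] (x : X) : LowerSet X :=
  LowerSet.Iic x

/-- The multiplication of the upset monad: union. -/
def UpMul {X : Type*} [Preorder X] (S : UpperSet (UpperSet X)) : UpperSet X :=
  ⟨{x : X | ∃ s ∈ S, x ∈ s}, by
    rintro a b hab ⟨s, hs, has⟩
    exact ⟨s, hs, s.upper hab has⟩⟩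

/-- The multiplication of the downset monad: union. -/
def DnMul {X : Type*} [Preorder X] (S : LowerSet (LowerSet X)) : LowerSet X :=
  ⟨{x : X | ∃ s ∈ S, x ∈ s}, by
    rintro a b hba ⟨s, hs, has⟩
    exact ⟨s, hs, s.lower hba has⟩⟩

/-- The distributive law `λ_X : Dn (Up X) → Up (Dn X)`,
`S ↦ {T ∈ Dn X | ∀ s ∈ S, s ∩ T ≠ ∅}`. -/
def distLaw {X : Type*} [Preorder X] (S : LowerSet (UpperSet X)) : UpperSet (LowerSet X) :=
  ⟨{T : LowerSet X | ∀ s ∈ S, ((s : Set X) ∩ (T : Set X)).Nonempty}, by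
    intro T T' hTT' h s hs
    exact (h s hs).imp fun x hx => ⟨hx.1, hTT' hx.2⟩⟩

/-- The unit law of the distributive law for the unit of `Dn`:
`λ_X (η^Dn_{Up X} S) = Up(η^Dn_X) S`, and concretely both sides are
`{T ∈ Dn X | (S ∩ T).Nonempty}`. -/
theorem distLaw_dnUnit {X : Type*} [PartialOrder X] (S : UpperSet X) :
    distLaw (DnUnit S) = UpMap (DnUnit (X := X)) S ∧
    (distLaw (DnUnit S) : Set (LowerSet X))
      = {T : LowerSet X | ((S : Set X) ∩ (T : Set X)).Nonempty} := by

  have key : (distLaw (DnUnit S) : Set (LowerSet X))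
      = {T : LowerSet X | ((S : Set X) ∩ (T : Set X)).Nonempty} := by
    ext T
    constructor
    · intro h
      exact h S (le_refl S)
    · rintro ⟨x, hxS, hxT⟩ s hs
      exact ⟨x, (UpperSet.coe_subset_coe.mpr hs) hxS, hxT⟩
  refine ⟨?_, key⟩
  apply SetLike.coe_injective
  rw [key]
  ext T
  constructor
  · rintro ⟨x, hxS, hxT⟩
    exact ⟨DnUnit x, ⟨x, hxS, rfl⟩, by simpa [DnUnit, LowerSet.Iic_le] using hxT⟩
  · rintro ⟨t, ⟨x, hxS, rfl⟩, ht⟩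
    exact ⟨x, hxS, LowerSet.coe_subset_coe.mpr ht (by simp [DnUnit])⟩
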